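/- Integral identity for the infimum of an affine family along an optimal selection: let ι be a nonempty type and a, b : ι → ℝ with 0 ≤ a i and 0 ≤ b i for all i, and define J : ℝ → ℝ by J r = ⨅ i, (a i + r * b i). Suppose there is B ≥ 0 with b i ≤ B for all i, and σ : ℝ → ι attains the infimum: J r = a (σ r) + r * b (σ r) for all r ≥ 0. Assume (fun r => J r / r) tends to L₀ along nhdsWithin 0 (Set.Ioi 0) and tends to L∞ along Filter.atTop. Then the function r ↦ a (σ r) / r ^ 2 is integrable on Set.Ioi (0:ℝ) with respect to Lebesgue measure, and ∫ r in Set.Ioi 0, a (σ r) / r ^ 2 = L₀ − L∞. -/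

import Mathlib

open Filter MeasureTheory

theorem gittins_r_work_integral_of_selection
    {ι : Type*} [Nonempty ι] (a b : ι → ℝ)
    (ha : ∀ i, 0 ≤ a i) (hb : ∀ i, 0 ≤ b i)
    (J : ℝ → ℝ) (hJ : ∀ r, J r = ⨅ i, (a i + r * b i))
    (B : ℝ) (hB : 0 ≤ B) (hbB : ∀ i, b i ≤ B)
    (σ : ℝ → ι) (hσ : ∀ r : ℝ, 0 ≤ r → J r = a (σ r) + r * b (σ r))
    (L₀ Linf : ℝ)
    (hL₀ : Tendsto (fun r => J r / r) (nhdsWithin 0 (Set.Ioi (0 : ℝ))) (nhds L₀))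
    (hLinf : Tendsto (fun r => J r / r) atTop (nhds Linf)) :
    IntegrableOn (fun r => a (σ r) / r ^ 2) (Set.Ioi (0 : ℝ)) volume ∧
      ∫ r in Set.Ioi (0 : ℝ), a (σ r) / r ^ 2 = L₀ - Linf := by
  classical
  set g : ℝ → ℝ := fun r => J r / r with hg
  set ψ : ℝ → ℝ := fun r => if 0 < r then a (σ r) else 0 with hψdef
  have hψ_pos : ∀ r : ℝ, 0 < r → ψ r = a (σ r) := fun r hr => if_pos hr
  have hψ0 : ∀ r, 0 ≤ ψ r := by
    intro r
    by_cases h : 0 < r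
    · rw [hψ_pos r h]; exact ha _
    · simp [hψdef, h]
  -- key inequality
  have key : ∀ r s : ℝ, 0 < r → 0 < s → g r - g s ≤ ψ s * (1/r - 1/s) := by
    intro r s hr hs
    have hJle : J r ≤ a (σ s) + r * b (σ s) := by
      rw [hJ r]
      refine ciInf_le ⟨0, ?_⟩ (σ s)
      rintro x ⟨i, rfl⟩
      exact add_nonneg (ha i) (mul_nonneg hr.le (hb i))
    have h2 : J s = a (σ s) + s * b (σ s) := hσ s hs.le
    have h1 : J r / r ≤ (a (σ s) + r * b (σ s)) / r := by gcongr
    have e1 : (a (σ s) + r * b (σ s)) / r = a (σ s) * (1/r) + b (σ s) := by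
      field_simp
    have e2 : J s / s = a (σ s) * (1/s) + b (σ s) := by
      rw [h2]; field_simp
    rw [e1] at h1
    rw [hψ_pos s hs]
    simp only [hg] at *
    rw [e2]
    ring_nf
    ring_nf at h1
    linarith
  -- ψ is monotone
  have hψ_mono : Monotone ψ := by
    intro r s hrs
    rcases le_or_gt r 0 with hr | hr
    · have : ψ r = 0 := by simp [hψdef, not_lt.mpr hr]
      rw [this]; exact hψ0 s
    rcases eq_or_lt_of_le hrs with rfl | hrs'
    · exact le_rfl
    have hs : 0 < s := hr.trans hrs'
    have h1 := key r s hr hs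
    have h2 := key s r hs hr
    have hpos : 0 < 1/r - 1/s := by
      have := one_div_lt_one_div_of_lt hr hrs'
      linarith
    have hA : ψ r * (1/r - 1/s) ≤ ψ s * (1/r - 1/s) := by nlinarith [h1, h2]
    exact le_of_mul_le_mul_right hA hpos
  -- g is antitone on positives
  have hg_anti : ∀ r s : ℝ, 0 < r → r ≤ s → g s ≤ g r := by
    intro r s hr hrs
    have hs : 0 < s := lt_of_lt_of_le hr hrs
    have h2 := key s r hs hr
    have hle : 1/s ≤ 1/r := by gcongr
    nlinarith [hψ0 r, h2]
  set R : ℝ → ℝ := Function.rightLim ψ with hRdef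
  have hR_le : ∀ x u : ℝ, x < u → R x ≤ ψ u := fun x u h => hψ_mono.rightLim_le h
  have hle_R : ∀ x : ℝ, ψ x ≤ R x := fun x => hψ_mono.le_rightLim le_rfl
  have hR_mono : Monotone R := by
    intro x y hxy
    rcases eq_or_lt_of_le hxy with rfl | h
    · exact le_rfl
    calc R x ≤ ψ ((x + y)/2) := hR_le _ _ (by linarith)
    _ ≤ R y := hψ_mono.le_rightLim (by linarith)
  have hR_tendsto : ∀ x : ℝ, Tendsto ψ (nhdsWithin x (Set.Ioi x)) (nhds (R x)) :=
    fun x => hψ_mono.tendsto_rightLim x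
  -- derivative of g
  have hderiv : ∀ x : ℝ, 0 < x → HasDerivWithinAt g (-(R x / (x*x))) (Set.Ioi x) x := by
    intro x hx
    rw [hasDerivWithinAt_iff_tendsto_slope' (Set.notMem_Ioi.mpr le_rfl)]
    have hupper : ∀ s : ℝ, x < s → R x * (1/x - 1/s) ≤ g x - g s := by
      intro s hs
      have htd : Tendsto (fun u : ℝ => R x * (1/u - 1/s)) (nhdsWithin x (Set.Ioi x))
          (nhds (R x * (1/x - 1/s))) := by
        apply Tendsto.mono_left _ nhdsWithin_le_nhds
        exact (ContinuousAt.div continuousAt_const continuousAt_id hx.ne' |>.sub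
          continuousAt_const).const_mul _
      refine le_of_tendsto htd ?_
      filter_upwards [Ioo_mem_nhdsGT_of_mem ⟨le_rfl, hs⟩] with u hu
      have hu1 : x < u := hu.1
      have hu2 : u < s := hu.2
      have hupos : 0 < u := hx.trans hu1
      have h2 := key u s hupos (hx.trans hs)
      -- g u - g s ≥ ψ u (1/u - 1/s)
      have h3 := key s u (hx.trans hs) hupos
      have hfac : 0 ≤ 1/u - 1/s := by
        have : 1/s ≤ 1/u := by gcongr
        linarith
      have h4 : ψ u * (1/u - 1/s) ≤ g u - g s := by nlinarith [h3]
      have h5 : R x * (1/u - 1/s) ≤ ψ u * (1/u - 1/s) :=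
        mul_le_mul_of_nonneg_right (hR_le x u hu1) hfac
      have h6 : g u ≤ g x := hg_anti x u hx hu1.le
      linarith
    have hlower : ∀ s : ℝ, x < s → g x - g s ≤ ψ s * (1/x - 1/s) :=
      fun s hs => key x s hx (hx.trans hs)
    have hx2 : (0:ℝ) < x * x := mul_pos hx hx
    refine tendsto_of_tendsto_of_tendsto_of_le_of_le'
      (g := fun s => -(ψ s) * (1/(x*s))) (h := fun s => -(R x) * (1/(x*s))) ?_ ?_ ?_ ?_
    · -- lower tendsto
      have h1 : Tendsto (fun s : ℝ => -(ψ s)) (nhdsWithin x (Set.Ioi x)) (nhds (-(R x))) :=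
        (hR_tendsto x).neg
      have h2 : Tendsto (fun s : ℝ => 1/(x*s)) (nhdsWithin x (Set.Ioi x)) (nhds (1/(x*x))) := by
        apply Tendsto.mono_left _ nhdsWithin_le_nhds
        exact ContinuousAt.div continuousAt_const (continuousAt_const.mul continuousAt_id)
          hx2.ne'
      have := h1.mul h2
      have he : -(R x) * (1/(x*x)) = -(R x / (x*x)) := by ring
      rwa [he] at this
    · -- upper tendsto
      have h2 : Tendsto (fun s : ℝ => -(R x) * (1/(x*s))) (nhdsWithin x (Set.Ioi x))
          (nhds (-(R x) * (1/(x*x)))) := by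
        apply Tendsto.mono_left _ nhdsWithin_le_nhds
        exact (ContinuousAt.div continuousAt_const (continuousAt_const.mul continuousAt_id)
          hx2.ne').const_mul _
      have he : -(R x) * (1/(x*x)) = -(R x / (x*x)) := by ring
      rwa [he] at h2
    · -- lower bound on slope
      filter_upwards [self_mem_nhdsWithin] with s hs
      have hs' : x < s := hs
      have hspos : 0 < s := hx.trans hs'
      have h1 := hlower s hs'
      rw [slope_def_field]
      rw [le_div_iff₀ (by linarith : (0:ℝ) < s - x)]
      have e : 1/x - 1/s = (s - x)/(x*s) := by field_simp
      rw [e] at h1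
      have e2 : -ψ s * (1/(x*s)) * (s - x) = -(ψ s * ((s - x)/(x*s))) := by ring
      linarith [h1, e2]
    · -- upper bound on slope
      filter_upwards [self_mem_nhdsWithin] with s hs
      have hs' : x < s := hs
      have hspos : 0 < s := hx.trans hs'
      have h1 := hupper s hs'
      rw [slope_def_field]
      rw [div_le_iff₀ (by linarith : (0:ℝ) < s - x)]
      have e : 1/x - 1/s = (s - x)/(x*s) := by field_simp
      rw [e] at h1
      have e2 : -R x * (1/(x*s)) * (s - x) = -(R x * ((s - x)/(x*s))) := by ring
      linarith [h1, e2]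
  -- measurability and a.e. identification of R with ψ
  have hRmeas : Measurable R := hR_mono.measurable
  have hDcount : Set.Countable {x : ℝ | ¬ContinuousWithinAt ψ (Set.Ioi x) x} :=
    by simpa using (hψ_mono.monotoneOn Set.univ).countable_not_continuousWithinAt_Ioi
  have haeRψ : ∀ᵐ x : ℝ ∂volume, R x = ψ x := by
    have hz : volume {x : ℝ | ¬ContinuousWithinAt ψ (Set.Ioi x) x} = 0 :=
      Set.Countable.measure_zero hDcount _
    rw [MeasureTheory.ae_iff]
    refine measure_mono_null ?_ hz
    intro x hx
    simp only [Set.mem_setOf_eq] at *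
    intro hcont
    exact hx ((hψ_mono.continuousWithinAt_Ioi_iff_rightLim_eq.mp hcont) ▸ rfl)
  -- integrability of R x / (x*x) on Ioc ε M
  have hint : ∀ ε M : ℝ, 0 < ε → ε ≤ M →
      IntegrableOn (fun x => R x / (x*x)) (Set.Ioc ε M) volume := by
    intro ε M hε hεM
    have hmeas : AEStronglyMeasurable (fun x => R x / (x*x))
        (volume.restrict (Set.Ioc ε M)) :=
      ((hRmeas.div (measurable_id.mul measurable_id)).aestronglyMeasurable).restrict
    refine Integrable.mono' (integrable_const (R M / (ε*ε))) hmeas ?_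
    filter_upwards [ae_restrict_mem measurableSet_Ioc] with x hx
    have hx1 : ε < x := hx.1
    have hx2 : x ≤ M := hx.2
    have hxpos : 0 < x := hε.trans hx1
    have h0 : 0 ≤ R x := le_trans (hψ0 x) (hle_R x)
    rw [Real.norm_of_nonneg (div_nonneg h0 (by positivity))]
    apply div_le_div₀ (le_trans h0 (hR_mono hx2)) (hR_mono hx2) (mul_pos hε hε)
    nlinarith
  -- continuity of g on Icc ε M
  have hcont : ∀ ε M : ℝ, 0 < ε → ε ≤ M → ContinuousOn g (Set.Icc ε M) := by
    intro ε M hε hεM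
    have hK : (0:ℝ) ≤ ψ M / (ε*ε) := div_nonneg (hψ0 M) (by positivity)
    apply LipschitzOnWith.continuousOn (K := Real.toNNReal (ψ M / (ε*ε)))
    apply LipschitzOnWith.of_dist_le_mul
    intro r hr s hs
    wlog hrs : s ≤ r generalizing r s
    · rw [dist_comm, dist_comm r s]; exact this s hs r hr (le_of_not_ge hrs)
    have hsp : 0 < s := lt_of_lt_of_le hε hs.1
    have hrp : 0 < r := lt_of_lt_of_le hε hr.1
    have h1 := key s r hsp (lt_of_lt_of_le hε hr.1)
    have h2 : g r ≤ g s := hg_anti s r hsp hrs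
    have e : 1/s - 1/r = (r - s)/(s*r) := by
      field_simp [hsp.ne', hrp.ne']
    rw [e] at h1
    have hb1 : ψ r ≤ ψ M := hψ_mono hr.2
    have hb2 : (r - s)/(s*r) ≤ (r - s)/(ε*ε) := by
      apply div_le_div_of_nonneg_left (by linarith) (mul_pos hε hε)
      nlinarith [hr.1, hs.1]
    have hb3 : g s - g r ≤ ψ M * ((r - s)/(ε*ε)) := by
      calc g s - g r ≤ ψ r * ((r - s)/(s*r)) := h1
      _ ≤ ψ M * ((r - s)/(ε*ε)) := by
          apply mul_le_mul hb1 hb2 (div_nonneg (by linarith) (mul_pos hsp hrp).le) (hψ0 M)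
    rw [Real.dist_eq, Real.dist_eq,
      abs_of_nonpos (by linarith : g r - g s ≤ 0),
      abs_of_nonneg (by linarith : (0:ℝ) ≤ r - s)]
    have hKge : ψ M / (ε*ε) ≤ (Real.toNNReal (ψ M / (ε*ε)) : ℝ) := Real.le_coe_toNNReal _
    have e3 : ψ M * ((r - s)/(ε*ε)) = (ψ M/(ε*ε)) * (r - s) := by ring
    have e4 := mul_le_mul_of_nonneg_right hKge (by linarith : (0:ℝ) ≤ r - s)
    linarith [hb3, e3, e4]
  -- FTC
  have hFTC : ∀ ε M : ℝ, 0 < ε → ε ≤ M →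
      ∫ x in Set.Ioc ε M, R x / (x*x) = g ε - g M := by
    intro ε M hε hεM
    have h1 : ∫ x in ε..M, (-(R x / (x*x))) = g M - g ε := by
      apply intervalIntegral.integral_eq_sub_of_hasDeriv_right_of_le hεM (hcont ε M hε hεM)
      · intro x hx
        exact hderiv x (hε.trans hx.1)
      · rw [intervalIntegrable_iff_integrableOn_Ioc_of_le hεM]
        exact (hint ε M hε hεM).neg
    rw [intervalIntegral.integral_of_le hεM, MeasureTheory.integral_neg] at h1
    linarith
  -- assemble with an AECover
  set μ : Measure ℝ := volume.restrict (Set.Ioi (0:ℝ)) with hμ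
  set F : ℝ → ℝ := fun r => a (σ r) / r ^ 2 with hF
  have hF0 : ∀ r, 0 ≤ F r := fun r => div_nonneg (ha _) (sq_nonneg r)
  set φ : ℕ → Set ℝ := fun n => Set.Ioc (((n:ℝ)+1)⁻¹) ((n:ℝ)+1) with hφ
  have hεpos : ∀ n : ℕ, (0:ℝ) < ((n:ℝ)+1)⁻¹ := fun n => by positivity
  have hεM : ∀ n : ℕ, ((n:ℝ)+1)⁻¹ ≤ (n:ℝ)+1 := by
    intro n
    have h1 : (1:ℝ) ≤ (n:ℝ)+1 := by
      have : (0:ℝ) ≤ (n:ℝ) := Nat.cast_nonneg n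
      linarith
    calc ((n:ℝ)+1)⁻¹ ≤ 1 := by
          rw [inv_le_one_iff₀]; right; exact h1
    _ ≤ (n:ℝ)+1 := h1
  have hres : ∀ n : ℕ, μ.restrict (φ n) = volume.restrict (φ n) := by
    intro n
    rw [hμ, Measure.restrict_restrict measurableSet_Ioc]
    congr 1
    rw [Set.inter_eq_left]
    intro x hx
    exact lt_of_lt_of_le (hεpos n) hx.1.le
  have hcover : AECover μ atTop φ := by
    constructor
    · filter_upwards [ae_restrict_mem measurableSet_Ioi] with x hx
      have h1 : ∀ᶠ n : ℕ in atTop, ((n:ℝ)+1)⁻¹ < x := by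
        have htend : Tendsto (fun n : ℕ => ((n:ℝ)+1)⁻¹) atTop (nhds 0) :=
          tendsto_one_div_add_atTop_nhds_zero_nat.congr (fun n => by rw [one_div])
        exact htend.eventually_lt_const hx
      have h2 : ∀ᶠ n : ℕ in atTop, x ≤ (n:ℝ)+1 := by
        have htend : Tendsto (fun n : ℕ => (n:ℝ)+1) atTop atTop :=
          tendsto_atTop_add_const_right _ _ tendsto_natCast_atTop_atTop
        exact htend.eventually_ge_atTop x
      filter_upwards [h1, h2] with n hn1 hn2
      exact ⟨hn1, hn2⟩
    · intro n; exact measurableSet_Ioc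
  -- on each φ n, F agrees a.e. with R x/(x*x)
  have hFae : ∀ n, F =ᵐ[volume.restrict (φ n)] (fun x => R x / (x*x)) := by
    intro n
    have h1 : ∀ᵐ x ∂(volume.restrict (φ n)), R x = ψ x := ae_restrict_of_ae haeRψ
    filter_upwards [h1, ae_restrict_mem measurableSet_Ioc] with x hx1 hx2
    have hxpos : 0 < x := lt_of_lt_of_le (hεpos n) hx2.1.le
    rw [hF]
    simp only
    rw [hx1, hψ_pos x hxpos, sq]
  have hFi : ∀ n, IntegrableOn F (φ n) μ := by
    intro n
    rw [IntegrableOn, hres n]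
    exact (hint _ _ (hεpos n) (hεM n)).congr (hFae n).symm
  have hFint : ∀ n : ℕ, ∫ x in φ n, F x ∂μ = g (((n:ℝ)+1)⁻¹) - g ((n:ℝ)+1) := by
    intro n
    rw [hres n, MeasureTheory.integral_congr_ae (hFae n)]
    exact hFTC _ _ (hεpos n) (hεM n)
  have hFnorm : ∀ n : ℕ, ∫ x in φ n, ‖F x‖ ∂μ = ∫ x in φ n, F x ∂μ := by
    intro n
    have e : (fun x => ‖F x‖) = F := funext fun x => Real.norm_of_nonneg (hF0 x)
    rw [e]
  have htend : Tendsto (fun n : ℕ => g (((n:ℝ)+1)⁻¹) - g ((n:ℝ)+1)) atTop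
      (nhds (L₀ - Linf)) := by
    apply Tendsto.sub
    · apply hL₀.comp
      apply tendsto_nhdsWithin_of_tendsto_nhds_of_eventually_within
      · exact tendsto_one_div_add_atTop_nhds_zero_nat.congr (fun n => by rw [one_div])
      · exact Eventually.of_forall fun n => Set.mem_Ioi.mpr (hεpos n)
    · exact hLinf.comp (tendsto_atTop_add_const_right _ _ tendsto_natCast_atTop_atTop)
  have heq1 : (fun n : ℕ => ∫ x in φ n, ‖F x‖ ∂μ)
      = fun n : ℕ => g (((n:ℝ)+1)⁻¹) - g ((n:ℝ)+1) :=
    funext fun n => by rw [hFnorm n, hFint n]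
  have heq2 : (fun n : ℕ => ∫ x in φ n, F x ∂μ)
      = fun n : ℕ => g (((n:ℝ)+1)⁻¹) - g ((n:ℝ)+1) :=
    funext fun n => hFint n
  have hInt : Integrable F μ := by
    apply hcover.integrable_of_integral_norm_tendsto (L₀ - Linf) hFi
    rw [heq1]
    exact htend
  have hEq : ∫ x, F x ∂μ = L₀ - Linf := by
    apply hcover.integral_eq_of_tendsto _ hInt
    rw [heq2]
    exact htend
  exact ⟨hInt, hEq⟩
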